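/- Let k ≥ 1 be an integer and 0 < τ < π. Let f : [0,τ] → [0,∞) be continuous, not identically zero, sin^k-concave, and attaining its maximum at 0. Then τ ≤ π/2, and for every ε ∈ [0, π/2]: (∫₀^{min(ε,τ)} f(t) dt)/(∫₀^τ f(t) dt) ≥ (∫₀^ε cos(t)^k dt)/(∫₀^{π/2} cos(t)^k dt). -/

import Mathlib

open Real Set MeasureTheory intervalIntegral

/-- `f` is `sin^k`-concave on the interval `I` (of length `< π`). -/
def SinPowConcaveOn (k : ℕ) (I : Set ℝ) (f : ℝ → ℝ) : Prop :=
  ∀ x₁ ∈ I, ∀ x₂ ∈ I, x₁ ≠ x₂ → ∀ α : ℝ, 0 < α → α < 1 →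
    (Real.sin (α * |x₂ - x₁|) / Real.sin |x₂ - x₁|) * f x₁ ^ (1 / (k : ℝ)) +
        (Real.sin ((1 - α) * |x₂ - x₁|) / Real.sin |x₂ - x₁|) * f x₂ ^ (1 / (k : ℝ))
      ≤ f (α * x₁ + (1 - α) * x₂) ^ (1 / (k : ℝ))

private lemma rpow_pow_cancel {x : ℝ} {k : ℕ} (hk : 1 ≤ k) (hx : 0 ≤ x) :
    (x ^ (1 / (k : ℝ))) ^ k = x := by
  have hk0 : (k : ℝ) ≠ 0 := Nat.cast_ne_zero.mpr (Nat.one_le_iff_ne_zero.mp hk)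
  rw [← Real.rpow_natCast (x ^ (1 / (k : ℝ))) k, ← Real.rpow_mul hx, one_div,
    inv_mul_cancel₀ hk0, Real.rpow_one]

set_option maxHeartbeats 2000000 in
/-- For a nonzero `sin^k`-concave function `f : [0,τ] → [0,∞)` attaining its maximum at
`0`, one has `τ ≤ π/2` and, for every `ε ∈ [0,π/2]`,
`(∫₀^{min(ε,τ)} f)/(∫₀^τ f) ≥ (∫₀^ε cos^k)/(∫₀^{π/2} cos^k)`. -/
theorem sinPowConcave_mass_ratio (k : ℕ) (hk : 1 ≤ k)
    (τ : ℝ) (hτ0 : 0 < τ) (hτ : τ < Real.pi)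
    (f : ℝ → ℝ) (hfc : ContinuousOn f (Set.Icc 0 τ))
    (hfnonneg : ∀ x ∈ Set.Icc 0 τ, 0 ≤ f x)
    (hfne : ∃ x ∈ Set.Icc 0 τ, f x ≠ 0)
    (hconc : SinPowConcaveOn k (Set.Icc 0 τ) f)
    (hmax : ∀ x ∈ Set.Icc 0 τ, f x ≤ f 0) :
    τ ≤ Real.pi / 2 ∧
      ∀ ε ∈ Set.Icc (0 : ℝ) (Real.pi / 2),
        (∫ t in (0 : ℝ)..ε, Real.cos t ^ k) /
            (∫ t in (0 : ℝ)..(Real.pi / 2), Real.cos t ^ k) ≤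
          (∫ t in (0 : ℝ)..(min ε τ), f t) / (∫ t in (0 : ℝ)..τ, f t) := by
  obtain ⟨x₀, hx₀, hfx₀⟩ := hfne
  have hπ := Real.pi_pos
  have hf0 : 0 < f 0 :=
    lt_of_lt_of_le ((hfnonneg _ hx₀).lt_of_ne (Ne.symm hfx₀)) (hmax _ hx₀)
  have hg0 : 0 < f 0 ^ (1 / (k : ℝ)) := Real.rpow_pos_of_pos hf0 _
  have hgnn : ∀ x ∈ Set.Icc (0:ℝ) τ, 0 ≤ f x ^ (1 / (k : ℝ)) := fun x hx =>
    Real.rpow_nonneg (hfnonneg x hx) _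
  have hgle : ∀ x ∈ Set.Icc (0:ℝ) τ, f x ^ (1 / (k : ℝ)) ≤ f 0 ^ (1 / (k : ℝ)) := fun x hx =>
    Real.rpow_le_rpow (hfnonneg x hx) (hmax x hx) (by positivity)
  -- the basic consequence of sin^k-concavity between 0 and t
  have haux : ∀ u t : ℝ, 0 < u → u < t → t ≤ τ →
      Real.sin (t - u) * f 0 ^ (1 / (k : ℝ)) + Real.sin u * f t ^ (1 / (k : ℝ))
        ≤ f u ^ (1 / (k : ℝ)) * Real.sin t := by
    intro u t hu hut htτ
    have ht0 : 0 < t := hu.trans hut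
    have hst : 0 < Real.sin t :=
      Real.sin_pos_of_pos_of_lt_pi ht0 (lt_of_le_of_lt htτ hτ)
    have h := hconc 0 ⟨le_refl _, hτ0.le⟩ t ⟨ht0.le, htτ⟩ ht0.ne ((t - u) / t)
      (div_pos (by linarith) ht0) (by rw [div_lt_one ht0]; linarith)
    have e0 : |t - (0:ℝ)| = t := by rw [sub_zero, abs_of_pos ht0]
    rw [e0] at h
    have e1 : (t - u) / t * t = t - u := div_mul_cancel₀ _ ht0.ne'
    have e2 : (1 - (t - u) / t) * t = u := by field_simp; ring
    rw [e1, e2, mul_zero, zero_add] at h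
    rw [div_mul_eq_mul_div, div_mul_eq_mul_div, ← add_div, div_le_iff₀ hst] at h
    exact h
  -- Lemma 2 : g(t) ≤ g(0) cos t on [0,τ]
  have hlem2 : ∀ t ∈ Set.Icc (0:ℝ) τ,
      f t ^ (1 / (k : ℝ)) ≤ f 0 ^ (1 / (k : ℝ)) * Real.cos t := by
    intro t ht
    rcases eq_or_lt_of_le ht.1 with h0 | h0t
    · rw [← h0, Real.cos_zero, mul_one]
    by_contra hcon
    push_neg at hcon
    set g0 := f 0 ^ (1 / (k : ℝ)) with hg0def
    set δ := f t ^ (1 / (k : ℝ)) - g0 * Real.cos t with hδ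
    have hδpos : 0 < δ := by simp only [hδ]; linarith
    have hst : 0 < Real.sin t :=
      Real.sin_pos_of_pos_of_lt_pi h0t (lt_of_le_of_lt ht.2 hτ)
    have hgst0 : 0 < g0 * Real.sin t := mul_pos hg0 hst
    have hδq : 0 < δ / (g0 * Real.sin t) := div_pos hδpos hgst0
    set u := min t (min 1 (δ / (g0 * Real.sin t))) / 2 with hu
    have hmin0 : 0 < min t (min 1 (δ / (g0 * Real.sin t))) :=
      lt_min h0t (lt_min one_pos hδq)
    have hu0 : 0 < u := by simp only [hu]; linarith
    have hut : u < t := by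
      simp only [hu]; linarith [min_le_left t (min 1 (δ / (g0 * Real.sin t)))]
    have hu1 : u ≤ 1 := by
      simp only [hu]
      linarith [min_le_right t (min 1 (δ / (g0 * Real.sin t))),
        min_le_left 1 (δ / (g0 * Real.sin t))]
    have huδ : u < δ / (g0 * Real.sin t) := by
      simp only [hu]
      linarith [min_le_right t (min 1 (δ / (g0 * Real.sin t))),
        min_le_right 1 (δ / (g0 * Real.sin t))]
    have h1 := haux u t hu0 hut ht.2
    have h2 : f u ^ (1 / (k : ℝ)) ≤ g0 := hgle u ⟨hu0.le, hut.le.trans ht.2⟩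
    have hsin_sub : Real.sin (t - u) = Real.sin t * Real.cos u - Real.cos t * Real.sin u :=
      Real.sin_sub t u
    -- sin u * δ ≤ g0 * sin t * (1 - cos u)
    have hgst : 0 < g0 * Real.sin t := mul_pos hg0 hst
    have hkey : Real.sin u * δ ≤ g0 * Real.sin t * (1 - Real.cos u) := by
      have : Real.sin (t - u) * g0 + Real.sin u * f t ^ (1 / (k : ℝ)) ≤ g0 * Real.sin t :=
        h1.trans (mul_le_mul_of_nonneg_right h2 hst.le)
      rw [hsin_sub] at this
      have hft : f t ^ (1 / (k : ℝ)) = g0 * Real.cos t + δ := by simp only [hδ]; ring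
      rw [hft] at this
      nlinarith
    have hcube : u ^ 3 ≤ u := by nlinarith [sq_nonneg u, hu0.le, hu1]
    have hsinu : u / 2 ≤ Real.sin u := by
      have := Real.sin_gt_sub_cube hu0
      linarith
    have hcosu : 1 - Real.cos u ≤ u ^ 2 / 2 := by
      have := Real.one_sub_sq_div_two_le_cos (x := u)
      linarith
    -- contradiction
    have hlt : u * (g0 * Real.sin t) < δ := (lt_div_iff₀ hgst0).mp huδ
    nlinarith [mul_le_mul_of_nonneg_right hsinu hδpos.le,
      mul_le_mul_of_nonneg_left hcosu hgst0.le,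
      mul_lt_mul_of_pos_right hlt (half_pos hu0)]
  -- τ ≤ π/2
  have hτhalf : τ ≤ Real.pi / 2 := by
    by_contra hcon
    push_neg at hcon
    have hcτ : Real.cos τ < 0 :=
      Real.cos_neg_of_pi_div_two_lt_of_lt hcon (by linarith)
    have h2 := hlem2 τ ⟨hτ0.le, le_refl _⟩
    have h3 := hgnn τ ⟨hτ0.le, le_refl _⟩
    nlinarith
  -- cross lemma at the g level
  have hgcross : ∀ a b : ℝ, 0 ≤ a → a ≤ b → b ≤ τ →
      f b ^ (1 / (k : ℝ)) * Real.cos a ≤ f a ^ (1 / (k : ℝ)) * Real.cos b := by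
    intro a b ha hab hbτ
    rcases eq_or_lt_of_le hab with rfl | hab
    · exact le_refl _
    have hbmem : b ∈ Set.Icc (0:ℝ) τ := ⟨ha.trans hab.le, hbτ⟩
    rcases eq_or_lt_of_le ha with rfl | ha0
    · simpa [Real.cos_zero] using hlem2 b hbmem
    have hsb : 0 < Real.sin b :=
      Real.sin_pos_of_pos_of_lt_pi (ha0.trans hab) (lt_of_le_of_lt hbτ hτ)
    have hcb : 0 ≤ Real.cos b :=
      Real.cos_nonneg_of_mem_Icc ⟨by linarith, hbτ.trans hτhalf⟩
    have h1 := haux a b ha0 hab hbτ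
    have h2 := hlem2 b hbmem
    have hsin_sub : Real.sin (b - a) = Real.sin b * Real.cos a - Real.cos b * Real.sin a :=
      Real.sin_sub b a
    have hsba : 0 ≤ Real.sin (b - a) :=
      Real.sin_nonneg_of_nonneg_of_le_pi (by linarith) (by linarith)
    have h2' := mul_le_mul_of_nonneg_left h2 hsba
    have h1' := mul_le_mul_of_nonneg_right h1 hcb
    rw [hsin_sub] at h1' h2'
    set gb := f b ^ (1 / (k : ℝ)) with hgb
    set ga := f a ^ (1 / (k : ℝ)) with hga
    set q0 := f 0 ^ (1 / (k : ℝ)) with hq0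
    have key : gb * Real.cos a * Real.sin b ≤ ga * Real.cos b * Real.sin b := by
      nlinarith [h1', h2']
    exact le_of_mul_le_mul_right key hsb
  -- cross lemma at the f level
  have hcross : ∀ a b : ℝ, 0 ≤ a → a ≤ b → b ≤ τ →
      f b * Real.cos a ^ k ≤ f a * Real.cos b ^ k := by
    intro a b ha hab hbτ
    have hamem : a ∈ Set.Icc (0:ℝ) τ := ⟨ha, hab.trans hbτ⟩
    have hbmem : b ∈ Set.Icc (0:ℝ) τ := ⟨ha.trans hab, hbτ⟩
    have hca : 0 ≤ Real.cos a :=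
      Real.cos_nonneg_of_mem_Icc ⟨by linarith, (hab.trans hbτ).trans hτhalf⟩
    have h0 : (0:ℝ) ≤ f b ^ (1 / (k : ℝ)) * Real.cos a := mul_nonneg (hgnn b hbmem) hca
    have h : (f b ^ (1 / (k : ℝ)) * Real.cos a) ^ k
        ≤ (f a ^ (1 / (k : ℝ)) * Real.cos b) ^ k :=
      pow_le_pow_left₀ h0 (hgcross a b ha hab hbτ) k
    rw [mul_pow, mul_pow, rpow_pow_cancel hk (hfnonneg b hbmem),
      rpow_pow_cancel hk (hfnonneg a hamem)] at h
    exact h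
  -- positivity of f on (0, τ)
  have hfpos : ∀ u ∈ Set.Ioo (0:ℝ) τ, 0 < f u := by
    intro u hu
    have h1 := haux u τ hu.1 hu.2 (le_refl _)
    have hsτ : 0 < Real.sin τ := Real.sin_pos_of_pos_of_lt_pi hτ0 hτ
    have hsτu : 0 < Real.sin (τ - u) :=
      Real.sin_pos_of_pos_of_lt_pi (by linarith [hu.2]) (by linarith [hu.1])
    have hsu : 0 ≤ Real.sin u :=
      Real.sin_nonneg_of_nonneg_of_le_pi hu.1.le (by linarith [hu.2])
    have hgτ := hgnn τ ⟨hτ0.le, le_refl _⟩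
    have hgu : 0 < f u ^ (1 / (k : ℝ)) := by nlinarith
    have := rpow_pow_cancel hk (hfnonneg u ⟨hu.1.le, hu.2.le⟩)
    rw [← this]
    exact pow_pos hgu k
  -- integrability
  have hfint : ∀ a b : ℝ, 0 ≤ a → a ≤ b → b ≤ τ →
      IntervalIntegrable f volume a b := by
    intro a b ha hab hb
    apply ContinuousOn.intervalIntegrable
    rw [Set.uIcc_of_le hab]
    exact hfc.mono (Set.Icc_subset_Icc ha hb)
  have hcosint : ∀ a b : ℝ, IntervalIntegrable (fun t => Real.cos t ^ k) volume a b :=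
    fun a b => Continuous.intervalIntegrable (by fun_prop) a b
  have hFτ : 0 < ∫ t in (0:ℝ)..τ, f t :=
    intervalIntegral_pos_of_pos_on (hfint 0 τ (le_refl _) hτ0.le (le_refl _)) hfpos hτ0
  have hCπ : 0 < ∫ t in (0:ℝ)..(Real.pi / 2), Real.cos t ^ k := by
    apply intervalIntegral_pos_of_pos_on (hcosint 0 _) _ (by positivity)
    intro x hx
    exact pow_pos (Real.cos_pos_of_mem_Ioo ⟨by linarith [hx.1], hx.2⟩) k
  refine ⟨hτhalf, fun ε hε => ?_⟩
  rcases le_or_gt τ ε with hτε | hετ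
  · -- easy case : min ε τ = τ
    rw [min_eq_right hτε, div_self hFτ.ne', div_le_one hCπ]
    have hsplit : (∫ t in (0:ℝ)..(Real.pi / 2), Real.cos t ^ k)
        = (∫ t in (0:ℝ)..ε, Real.cos t ^ k) + ∫ t in ε..(Real.pi / 2), Real.cos t ^ k :=
      (integral_add_adjacent_intervals (hcosint 0 ε) (hcosint ε _)).symm
    have hnn : 0 ≤ ∫ t in ε..(Real.pi / 2), Real.cos t ^ k := by
      apply intervalIntegral.integral_nonneg hε.2
      intro u hu
      exact pow_nonneg (Real.cos_nonneg_of_mem_Icc ⟨by linarith [hε.1, hu.1], hu.2⟩) k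
    linarith
  · -- main case : ε < τ
    rw [min_eq_left hετ.le, div_le_div_iff₀ hCπ hFτ]
    have hε2 : ε < Real.pi / 2 := lt_of_lt_of_le hετ hτhalf
    have hεmem : ε ∈ Set.Icc (0:ℝ) τ := ⟨hε.1, hετ.le⟩
    have hP : 0 < Real.cos ε ^ k :=
      pow_pos (Real.cos_pos_of_mem_Ioo ⟨by linarith [hε.1], hε2⟩) k
    have hsplitF : (∫ t in (0:ℝ)..τ, f t)
        = (∫ t in (0:ℝ)..ε, f t) + ∫ t in ε..τ, f t :=
      (integral_add_adjacent_intervals (hfint 0 ε (le_refl _) hε.1 hετ.le)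
        (hfint ε τ hε.1 hετ.le (le_refl _))).symm
    have hsplitC : (∫ t in (0:ℝ)..(Real.pi / 2), Real.cos t ^ k)
        = (∫ t in (0:ℝ)..ε, Real.cos t ^ k) + ∫ t in ε..(Real.pi / 2), Real.cos t ^ k :=
      (integral_add_adjacent_intervals (hcosint 0 ε) (hcosint ε _)).symm
    have hI : f ε * (∫ t in (0:ℝ)..ε, Real.cos t ^ k)
        ≤ (∫ t in (0:ℝ)..ε, f t) * Real.cos ε ^ k := by
      rw [← intervalIntegral.integral_const_mul, ← intervalIntegral.integral_mul_const]
      apply integral_mono_on hε.1 ((hcosint 0 ε).const_mul _)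
        ((hfint 0 ε (le_refl _) hε.1 hετ.le).mul_const _)
      intro s hs
      exact hcross s ε hs.1 hs.2 hετ.le
    have hII : (∫ t in ε..τ, f t) * Real.cos ε ^ k
        ≤ f ε * ∫ t in ε..τ, Real.cos t ^ k := by
      rw [← intervalIntegral.integral_const_mul, ← intervalIntegral.integral_mul_const]
      apply integral_mono_on hετ.le ((hfint ε τ hε.1 hετ.le (le_refl _)).mul_const _)
        ((hcosint ε τ).const_mul _)
      intro t ht
      exact hcross ε t hε.1 ht.1 ht.2
    have hIτ : (∫ t in ε..τ, Real.cos t ^ k) ≤ ∫ t in ε..(Real.pi / 2), Real.cos t ^ k := by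
      have hsplit2 : (∫ t in ε..(Real.pi / 2), Real.cos t ^ k)
          = (∫ t in ε..τ, Real.cos t ^ k) + ∫ t in τ..(Real.pi / 2), Real.cos t ^ k :=
        (integral_add_adjacent_intervals (hcosint ε τ) (hcosint τ _)).symm
      have hnn : 0 ≤ ∫ t in τ..(Real.pi / 2), Real.cos t ^ k := by
        apply intervalIntegral.integral_nonneg hτhalf
        intro u hu
        exact pow_nonneg (Real.cos_nonneg_of_mem_Icc ⟨by linarith [hu.1], hu.2⟩) k
      linarith
    have hII' : (∫ t in ε..τ, f t) * Real.cos ε ^ k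
        ≤ f ε * ∫ t in ε..(Real.pi / 2), Real.cos t ^ k :=
      hII.trans (mul_le_mul_of_nonneg_left hIτ (hfnonneg ε hεmem))
    have hB₁ : 0 ≤ ∫ t in (0:ℝ)..ε, Real.cos t ^ k := by
      apply intervalIntegral.integral_nonneg hε.1
      intro u hu
      exact pow_nonneg (Real.cos_nonneg_of_mem_Icc ⟨by linarith [hu.1], by linarith [hu.2]⟩) k
    have hB₂ : 0 ≤ ∫ t in ε..(Real.pi / 2), Real.cos t ^ k := by
      apply intervalIntegral.integral_nonneg hε2.le
      intro u hu
      exact pow_nonneg (Real.cos_nonneg_of_mem_Icc ⟨by linarith [hε.1, hu.1], hu.2⟩) k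
    rw [hsplitF, hsplitC]
    nlinarith [mul_le_mul_of_nonneg_right hI hB₂, mul_le_mul_of_nonneg_right hII' hB₁]
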